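/- Let C and D be permutation classes and let m be a natural number such that every permutation lying in both C and D has length at most m. Then for every natural number n, Σ_{i=0}^{n} (n choose i)² · |C_i| · |D_{n-i}| ≤ |(C⊙D)_n| · Σ_{i=0}^{2m} (n choose i). -/

import Mathlib

open Filter Topology ENNReal

/-- A permutation of length `n`, in one-line notation `π 0, π 1, …, π (n-1)`. -/
abbrev Perm (n : ℕ) := Equiv.Perm (Fin n)

/-- `Pattern σ π` : the permutation `σ` is contained in `π`, i.e. some subsequence of `π`
is order isomorphic to `σ`. -/
def Pattern {k n : ℕ} (σ : Perm k) (π : Perm n) : Prop :=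
  ∃ f : Fin k ↪o Fin n, ∀ i j : Fin k, σ i < σ j ↔ π (f i) < π (f j)

/-- A permutation class: a set of permutations closed downwards under containment. -/
structure PermClass where
  mem : ∀ n, Set (Perm n)
  closed : ∀ {k n : ℕ} (σ : Perm k) (π : Perm n), π ∈ mem n → Pattern σ π → σ ∈ mem k

/-- The entries of `π` at the positions in `A` form a sequence order isomorphic
to a member of the family `F`. -/
def SubpermIn {n : ℕ} (π : Perm n) (A : Set (Fin n)) (F : ∀ m, Set (Perm m)) : Prop :=
  ∃ (m : ℕ) (σ : Perm m) (f : Fin m ↪o Fin n),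
    Set.range ⇑f = A ∧ (∀ i j : Fin m, σ i < σ j ↔ π (f i) < π (f j)) ∧ σ ∈ F m

/-- The merge `C ⊙ D`: permutations whose entries can be partitioned into a subsequence
order isomorphic to a member of `C` and one order isomorphic to a member of `D`. -/
def mergeSet (C D : ∀ m, Set (Perm m)) (n : ℕ) : Set (Perm n) :=
  {π | ∃ A : Set (Fin n), SubpermIn π A C ∧ SubpermIn π Aᶜ D}

/-- `|F_n| ^ (1/n)` as a real number. -/
noncomputable def growthSeq (F : ∀ m, Set (Perm m)) (n : ℕ) : ℝ :=
  ((F n).ncard : ℝ) ^ ((n : ℝ)⁻¹)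

/-- The family `F` has (finite) proper growth rate `g`. -/
def HasGrowth (F : ∀ m, Set (Perm m)) (g : ℝ) : Prop :=
  Tendsto (growthSeq F) atTop (𝓝 g)

/-- `|F_n| ^ (1/n)` in the extended nonnegative reals. -/
noncomputable def eGrowthSeq (F : ∀ m, Set (Perm m)) (n : ℕ) : ℝ≥0∞ :=
  ((F n).ncard : ℝ≥0∞) ^ ((n : ℝ)⁻¹)

/-- The upper growth rate `limsup |F_n|^(1/n)`. -/
noncomputable def ugr (F : ∀ m, Set (Perm m)) : ℝ≥0∞ := limsup (eGrowthSeq F) atTop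

/-- The lower growth rate `liminf |F_n|^(1/n)`. -/
noncomputable def lgr (F : ∀ m, Set (Perm m)) : ℝ≥0∞ := liminf (eGrowthSeq F) atTop

/-- The direct sum `π ⊕ σ` of two permutations. -/
def dsum {m n : ℕ} (π : Perm m) (σ : Perm n) : Perm (m + n) :=
  finSumFinEquiv.symm.trans ((Equiv.sumCongr π σ).trans finSumFinEquiv)

/-- The skew sum `π ⊖ σ` of two permutations. -/
def skewSum {m n : ℕ} (π : Perm m) (σ : Perm n) : Perm (m + n) :=
  finSumFinEquiv.symm.trans ((Equiv.sumCongr π σ).trans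
    (((Equiv.sumComm (Fin m) (Fin n)).trans finSumFinEquiv).trans (finCongr (Nat.add_comm n m))))

/-- A family of permutations is sum closed if it is closed under `⊕`. -/
def SumClosed (F : ∀ m, Set (Perm m)) : Prop :=
  ∀ {m n : ℕ} (π : Perm m) (σ : Perm n), π ∈ F m → σ ∈ F n → dsum π σ ∈ F (m + n)

/-- A family of permutations is skew closed if it is closed under `⊖`. -/
def SkewClosed (F : ∀ m, Set (Perm m)) : Prop :=
  ∀ {m n : ℕ} (π : Perm m) (σ : Perm n), π ∈ F m → σ ∈ F n → skewSum π σ ∈ F (m + n)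

/-- The class of an empty (blocked) grid cell: only the empty permutation. -/
def emptyCell : ∀ m, Set (Perm m) := fun m => {_π | m = 0}

/-- The set of positions of `π` lying in column `k` and row `ℓ` of the gridding
determined by the column divisions `c` and row divisions `r`. -/
def cellSet {n : ℕ} (π : Perm n) (c r : ℕ → ℕ) (k ℓ : ℕ) : Set (Fin n) :=
  {i | c k ≤ (i : ℕ) ∧ (i : ℕ) < c (k + 1) ∧ r ℓ ≤ (π i : ℕ) ∧ (π i : ℕ) < r (ℓ + 1)}

/-- The grid class of an (infinite) matrix `M` of families of permutations, where
`M k ℓ` is the cell in column `k`, row `ℓ` (Cartesian coordinates, indexed from 0). -/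
def gridSet (M : ℕ → ℕ → ∀ m, Set (Perm m)) (n : ℕ) : Set (Perm n) :=
  {π | ∃ c r : ℕ → ℕ, Monotone c ∧ Monotone r ∧ c 0 = 0 ∧ r 0 = 0 ∧
    (∀ k, c k ≤ n) ∧ (∀ ℓ, r ℓ ≤ n) ∧ (∃ k, c k = n) ∧ (∃ ℓ, r ℓ = n) ∧
    ∀ k ℓ, cellSet π c r k ℓ = ∅ ∨ SubpermIn π (cellSet π c r k ℓ) (M k ℓ)}

/-- The matrix of the infinite increasing `(C, D)` staircase: cell in column `i`, row `i`
is `C`, cell in column `i+1`, row `i` is `D`, all other cells empty. -/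
def incStairM (C D : ∀ m, Set (Perm m)) : ℕ → ℕ → ∀ m, Set (Perm m) :=
  fun k ℓ => if k = ℓ then C else if k = ℓ + 1 then D else emptyCell

/-- The decreasing permutation `k (k-1) ⋯ 2 1` of length `k`. -/
def delta (k : ℕ) : Perm k := ⟨Fin.rev, Fin.rev, Fin.rev_rev, Fin.rev_rev⟩

/-- The class of permutations avoiding the pattern `τ`. -/
def avSet {k : ℕ} (τ : Perm k) : ∀ n, Set (Perm n) := fun n => {π | ¬ Pattern τ π}

/-- The shape of an infinite `(C,D)` staircase: `pos j` is the (column, row) position of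
the `(j+1)`-st cell; odd-indexed steps share a row with their predecessor, even-indexed
steps share a column with their predecessor, and no other sharing of rows or columns occurs. -/
structure StaircaseData where
  pos : ℕ → ℕ × ℕ
  inj : Function.Injective pos
  rowEq : ∀ i, (pos (2 * i + 1)).2 = (pos (2 * i)).2
  colEq : ∀ i, (pos (2 * i + 2)).1 = (pos (2 * i + 1)).1
  rowOnly : ∀ j j', (pos j).2 = (pos j').2 → j / 2 = j' / 2
  colOnly : ∀ j j', (pos j).1 = (pos j').1 → (j + 1) / 2 = (j' + 1) / 2

open Classical in
/-- The matrix of the infinite `(C,D)` staircase with shape `S`: the odd-numbered cells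
(cells `1, 3, 5, …`, i.e. `pos 0, pos 2, …`) are `C`, the even-numbered cells are `D`. -/
noncomputable def StaircaseData.M (S : StaircaseData) (C D : ∀ m, Set (Perm m)) :
    ℕ → ℕ → ∀ m, Set (Perm m) :=
  fun k ℓ => if ∃ i, S.pos (2 * i) = (k, ℓ) then C
    else if ∃ i, S.pos (2 * i + 1) = (k, ℓ) then D else emptyCell

open Classical in
/-- The matrix of the `t`-step restriction of the staircase: only the first `2t` cells. -/
noncomputable def StaircaseData.Mstep (S : StaircaseData) (C D : ∀ m, Set (Perm m)) (t : ℕ) :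
    ℕ → ℕ → ∀ m, Set (Perm m) :=
  fun k ℓ => if ∃ i < t, S.pos (2 * i) = (k, ℓ) then C
    else if ∃ i < t, S.pos (2 * i + 1) = (k, ℓ) then D else emptyCell

/-- The pattern (order-isomorphic permutation) of an injective sequence. -/
noncomputable def patternOf {j k : ℕ} (u : Fin j → Fin k) (hu : Function.Injective u) : Perm j :=
  Equiv.ofBijective
    (fun a => ((Finset.univ.image u).orderIsoOfFin
      (by rw [Finset.card_image_of_injective _ hu, Finset.card_univ, Fintype.card_fin])).symm
      ⟨u a, Finset.mem_image_of_mem u (Finset.mem_univ a)⟩)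
    (Finite.injective_iff_bijective.1 (fun a b hab => by
      have := (OrderIso.symm _).injective hab
      exact hu (congrArg Subtype.val this)))

lemma patternOf_lt_iff {j k : ℕ} (u : Fin j → Fin k) (hu : Function.Injective u) (a b : Fin j) :
    patternOf u hu a < patternOf u hu b ↔ u a < u b := by
  simp only [patternOf, Equiv.ofBijective_apply]
  rw [OrderIso.lt_iff_lt]
  exact Subtype.mk_lt_mk

/-- Two permutations inducing the same order comparisons are equal. -/
lemma perm_eq_of_iff {j : ℕ} (σ₁ σ₂ : Perm j) (h : ∀ a b, σ₁ a < σ₁ b ↔ σ₂ a < σ₂ b) :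
    σ₁ = σ₂ := by
  have hsm : StrictMono ⇑(σ₁.symm.trans σ₂) := by
    intro a b hab
    simp only [Equiv.trans_apply]
    rw [← h]
    simpa using hab
  have hu : (Finset.univ : Finset (Fin j)).card = j := by simp
  have h1 := Finset.orderEmbOfFin_unique hu (f := ⇑(σ₁.symm.trans σ₂))
    (fun x => Finset.mem_univ _) hsm
  have h2 := Finset.orderEmbOfFin_unique hu (f := (id : Fin j → Fin j))
    (fun x => Finset.mem_univ _) strictMono_id
  have : ⇑(σ₁.symm.trans σ₂) = (id : Fin j → Fin j) := h1.trans h2.symm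
  ext a
  have := congrFun this (σ₁ a)
  simp at this
  exact congrArg Fin.val this.symm

lemma subpermIn_anti {n : ℕ} (π : Perm n) {A B : Set (Fin n)} (F : PermClass)
    (hA : SubpermIn π A F.mem) (hBA : B ⊆ A) : SubpermIn π B F.mem := by
  classical
  obtain ⟨k, σ, f, hrange, hiso, hσ⟩ := hA
  set s : Finset (Fin k) := Finset.univ.filter (fun a => f a ∈ B) with hs
  set g : Fin s.card ↪o Fin k := s.orderEmbOfFin rfl with hg
  have huinj : Function.Injective (fun a => σ (g a)) :=
    σ.injective.comp g.injective
  refine ⟨s.card, patternOf _ huinj, g.trans f, ?_, ?_, ?_⟩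
  · ext x
    constructor
    · rintro ⟨a, rfl⟩
      have : g a ∈ s := by
        have : g a ∈ Set.range ⇑g := ⟨a, rfl⟩
        rwa [Finset.range_orderEmbOfFin] at this
      simpa [hs] using this
    · intro hx
      have hxA : x ∈ A := hBA hx
      rw [← hrange] at hxA
      obtain ⟨a, rfl⟩ := hxA
      have has : a ∈ s := by simp [hs, hx]
      have : a ∈ Set.range ⇑g := by rw [Finset.range_orderEmbOfFin]; exact has
      obtain ⟨b, rfl⟩ := this
      exact ⟨b, rfl⟩
  · intro a b
    rw [patternOf_lt_iff]
    exact hiso (g a) (g b)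
  · refine F.closed _ σ hσ ⟨g, ?_⟩
    intro a b
    exact patternOf_lt_iff _ huinj a b

lemma ncard_le_of_both {n : ℕ} (π : Perm n) {B : Set (Fin n)} (C D : PermClass) (m : ℕ)
    (h : ∀ (k : ℕ) (ρ : Perm k), ρ ∈ C.mem k → ρ ∈ D.mem k → k ≤ m)
    (hC : SubpermIn π B C.mem) (hD : SubpermIn π B D.mem) : B.ncard ≤ m := by
  obtain ⟨k, σ, f, hr, hi, hσ⟩ := hC
  obtain ⟨k', σ', f', hr', hi', hσ'⟩ := hD
  have hcard : ∀ (j : ℕ) (e : Fin j ↪o Fin n), Set.range ⇑e = B → B.ncard = j := by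
    intro j e he
    rw [← he, ← Nat.card_coe_set_eq, Nat.card_range_of_injective e.injective,
      Nat.card_eq_fintype_card, Fintype.card_fin]
  have hk : k = k' := by rw [← hcard k f hr, ← hcard k' f' hr']
  subst hk
  have hf : f = f' := by
    have h1 : ∀ x, f x ∈ B := fun x => hr ▸ Set.mem_range_self x
    have h2 : ∀ x, f' x ∈ B := fun x => hr' ▸ Set.mem_range_self x
    have hfin : B.Finite := Set.toFinite B
    have hsB : hfin.toFinset.card = k := by
      rw [← Set.ncard_eq_toFinset_card B hfin, hcard k f hr]
    rw [Finset.orderEmbOfFin_unique' hsB (f := f) (fun x => hfin.mem_toFinset.2 (h1 x)),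
      Finset.orderEmbOfFin_unique' hsB (f := f') (fun x => hfin.mem_toFinset.2 (h2 x))]
  have hσσ : σ = σ' := perm_eq_of_iff _ _ (fun a b => by
    rw [hi a b, hf, hi' a b])
  rw [hcard k f hr]
  exact h k σ hσ (hσσ ▸ hσ')

noncomputable def mkPerm (n i : ℕ) (P V : Finset (Fin n)) (σ : Perm i) (τ : Perm (n - i)) :
    Perm n :=
  if h : P.card = i ∧ V.card = i then
    have hPc : Pᶜ.card = n - i := by rw [Finset.card_compl, h.1, Fintype.card_fin]
    have hVc : Vᶜ.card = n - i := by rw [Finset.card_compl, h.2, Fintype.card_fin]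
    ((Equiv.sumCompl (· ∈ P)).symm.trans
      ((Equiv.sumCongr (P.orderIsoOfFin h.1).toEquiv.symm
        ((Equiv.subtypeEquivRight (fun x => (Finset.mem_compl (a := x)).symm)).trans
          (Pᶜ.orderIsoOfFin hPc).toEquiv.symm)).trans
        ((Equiv.sumCongr σ τ).trans
          ((Equiv.sumCongr (V.orderIsoOfFin h.2).toEquiv
            ((Vᶜ.orderIsoOfFin hVc).toEquiv.trans
              (Equiv.subtypeEquivRight (fun x => Finset.mem_compl)))).trans
            (Equiv.sumCompl (· ∈ V))))))
  else 1

lemma mkPerm_apply_mem {n i : ℕ} {P V : Finset (Fin n)} (hP : P.card = i) (hV : V.card = i)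
    (σ : Perm i) (τ : Perm (n - i)) (a : Fin i) :
    mkPerm n i P V σ τ (P.orderEmbOfFin hP a) = V.orderEmbOfFin hV (σ a) := by
  rw [mkPerm, dif_pos ⟨hP, hV⟩]
  have hmem : P.orderEmbOfFin hP a ∈ P := Finset.orderEmbOfFin_mem P hP a
  simp only [Equiv.trans_apply]
  rw [Equiv.sumCompl_symm_apply_of_pos hmem]
  have : (⟨P.orderEmbOfFin hP a, hmem⟩ : {x // x ∈ P}) = P.orderIsoOfFin hP a := by
    apply Subtype.ext
    rfl
  simp only [Equiv.sumCongr_apply, Sum.map_inl, this]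
  rw [show (P.orderIsoOfFin hP).toEquiv.symm (P.orderIsoOfFin hP a) = a from
    (P.orderIsoOfFin hP).toEquiv.symm_apply_apply a]
  rw [Equiv.sumCompl_apply_inl]
  exact Finset.coe_orderIsoOfFin_apply V hV (σ a)

lemma mkPerm_apply_not_mem {n i : ℕ} {P V : Finset (Fin n)} (hP : P.card = i) (hV : V.card = i)
    (hPc : Pᶜ.card = n - i) (hVc : Vᶜ.card = n - i)
    (σ : Perm i) (τ : Perm (n - i)) (a : Fin (n - i)) :
    mkPerm n i P V σ τ (Pᶜ.orderEmbOfFin hPc a) = Vᶜ.orderEmbOfFin hVc (τ a) := by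
  rw [mkPerm, dif_pos ⟨hP, hV⟩]
  have hmemc : Pᶜ.orderEmbOfFin hPc a ∈ Pᶜ := Finset.orderEmbOfFin_mem Pᶜ hPc a
  have hmem : ¬ (Pᶜ.orderEmbOfFin hPc a ∈ P) := Finset.mem_compl.1 hmemc
  simp only [Equiv.trans_apply]
  rw [Equiv.sumCompl_symm_apply_of_neg hmem]
  simp only [Equiv.sumCongr_apply, Sum.map_inr, Equiv.trans_apply]
  have h1 : (Equiv.subtypeEquivRight (q := (· ∈ Pᶜ))
      (fun x => (Finset.mem_compl (a := x)).symm)) ⟨Pᶜ.orderEmbOfFin hPc a, hmem⟩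
      = Pᶜ.orderIsoOfFin hPc a := by
    apply Subtype.ext
    rfl
  rw [h1]
  rw [show (Pᶜ.orderIsoOfFin hPc).toEquiv.symm (Pᶜ.orderIsoOfFin hPc a) = a from
    (Pᶜ.orderIsoOfFin hPc).toEquiv.symm_apply_apply a]
  rw [Equiv.sumCompl_apply_inr]
  exact Finset.coe_orderIsoOfFin_apply Vᶜ hVc (τ a)

lemma mkPerm_subperm_left {n i : ℕ} {P V : Finset (Fin n)} (hP : P.card = i) (hV : V.card = i)
    {σ : Perm i} (τ : Perm (n - i)) (F : ∀ m, Set (Perm m)) (hσ : σ ∈ F i) :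
    SubpermIn (mkPerm n i P V σ τ) ↑P F := by
  refine ⟨i, σ, P.orderEmbOfFin hP, Finset.range_orderEmbOfFin P hP, ?_, hσ⟩
  intro a b
  rw [mkPerm_apply_mem hP hV, mkPerm_apply_mem hP hV]
  exact ((V.orderEmbOfFin hV).lt_iff_lt).symm

lemma mkPerm_subperm_right {n i : ℕ} {P V : Finset (Fin n)} (hP : P.card = i) (hV : V.card = i)
    (σ : Perm i) {τ : Perm (n - i)} (F : ∀ m, Set (Perm m)) (hτ : τ ∈ F (n - i)) :
    SubpermIn (mkPerm n i P V σ τ) (↑P : Set (Fin n))ᶜ F := by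
  have hPc : Pᶜ.card = n - i := by rw [Finset.card_compl, hP, Fintype.card_fin]
  have hVc : Vᶜ.card = n - i := by rw [Finset.card_compl, hV, Fintype.card_fin]
  refine ⟨n - i, τ, Pᶜ.orderEmbOfFin hPc, ?_, ?_, hτ⟩
  · rw [Finset.range_orderEmbOfFin, Finset.coe_compl]
  · intro a b
    rw [mkPerm_apply_not_mem hP hV hPc hVc, mkPerm_apply_not_mem hP hV hPc hVc]
    exact ((Vᶜ.orderEmbOfFin hVc).lt_iff_lt).symm

lemma mkPerm_image {n i : ℕ} {P V : Finset (Fin n)} (hP : P.card = i) (hV : V.card = i)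
    (σ : Perm i) (τ : Perm (n - i)) :
    P.image (mkPerm n i P V σ τ) = V := by
  apply Finset.eq_of_subset_of_card_le
  · intro x hx
    rw [Finset.mem_image] at hx
    obtain ⟨y, hy, rfl⟩ := hx
    have : y ∈ Set.range ⇑(P.orderEmbOfFin hP) := by
      rw [Finset.range_orderEmbOfFin]; exact hy
    obtain ⟨a, rfl⟩ := this
    rw [mkPerm_apply_mem hP hV]
    exact Finset.orderEmbOfFin_mem V hV (σ a)
  · rw [Finset.card_image_of_injective _ (mkPerm n i P V σ τ).injective, hP, hV]

open Classical in
lemma partA (C D : PermClass) (n : ℕ) :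
    ∑ i ∈ Finset.range (n + 1),
        n.choose i ^ 2 * (C.mem i).ncard * (D.mem (n - i)).ncard ≤
      (Finset.univ.filter (fun p : Perm n × Finset (Fin n) =>
        SubpermIn p.1 ↑p.2 C.mem ∧ SubpermIn p.1 (↑p.2 : Set (Fin n))ᶜ D.mem)).card := by
  classical
  set t : ∀ i : ℕ, Finset (Finset (Fin n) × Finset (Fin n) × Perm i × Perm (n - i)) :=
    fun i => (Finset.powersetCard i Finset.univ) ×ˢ (Finset.powersetCard i Finset.univ)
      ×ˢ (Set.toFinite (C.mem i)).toFinset ×ˢ (Set.toFinite (D.mem (n - i))).toFinset with ht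
  have hcards : ∀ i, (t i).card =
      n.choose i ^ 2 * (C.mem i).ncard * (D.mem (n - i)).ncard := by
    intro i
    simp only [ht, Finset.card_product, Finset.card_powersetCard, Finset.card_univ,
      Fintype.card_fin]
    rw [← Set.ncard_eq_toFinset_card, ← Set.ncard_eq_toFinset_card]
    ring
  have hsum : ∑ i ∈ Finset.range (n + 1),
      n.choose i ^ 2 * (C.mem i).ncard * (D.mem (n - i)).ncard
      = ((Finset.range (n + 1)).sigma t).card := by
    rw [Finset.card_sigma]
    exact Finset.sum_congr rfl fun i _ => (hcards i).symm
  rw [hsum]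
  apply Finset.card_le_card_of_injOn
    (f := fun q : Σ i : ℕ, Finset (Fin n) × Finset (Fin n) × Perm i × Perm (n - i) =>
      (mkPerm n q.1 q.2.1 q.2.2.1 q.2.2.2.1 q.2.2.2.2, q.2.1))
  · rintro ⟨i, P, V, σ, τ⟩ hq
    rw [Finset.mem_coe, Finset.mem_sigma] at hq
    obtain ⟨-, hq⟩ := hq
    simp only [ht, Finset.mem_product] at hq
    obtain ⟨hP, hV, hσ, hτ⟩ := hq
    rw [Finset.mem_powersetCard_univ] at hP hV
    rw [Set.Finite.mem_toFinset] at hσ hτ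
    simp only [Finset.mem_coe, Finset.mem_filter, Finset.mem_univ, true_and]
    exact ⟨mkPerm_subperm_left hP hV τ C.mem hσ, mkPerm_subperm_right hP hV σ D.mem hτ⟩
  · rintro ⟨i, P, V, σ, τ⟩ hq ⟨i', P', V', σ', τ'⟩ hq' hfeq
    simp only [Finset.mem_coe, Finset.mem_sigma, ht, Finset.mem_product,
      Finset.mem_powersetCard_univ, Set.Finite.mem_toFinset] at hq hq'
    obtain ⟨-, hP, hV, hσ, hτ⟩ := hq
    obtain ⟨-, hP', hV', hσ', hτ'⟩ := hq'
    simp only [Prod.mk.injEq] at hfeq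
    obtain ⟨hπeq, hPeq⟩ := hfeq
    have hii : i = i' := by rw [← hP, ← hP', hPeq]
    subst hii
    subst hPeq
    have hVeq : V = V' := by
      rw [← mkPerm_image hP hV σ τ, ← mkPerm_image hP' hV' σ' τ', hπeq]
    subst hVeq
    have hPc : Pᶜ.card = n - i := by rw [Finset.card_compl, hP, Fintype.card_fin]
    have hVc : Vᶜ.card = n - i := by rw [Finset.card_compl, hV, Fintype.card_fin]
    have hσeq : σ = σ' := by
      ext1 a
      apply (V.orderEmbOfFin hV).injective
      rw [← mkPerm_apply_mem hP hV σ τ a, ← mkPerm_apply_mem hP hV σ' τ' a, hπeq]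
    have hτeq : τ = τ' := by
      ext1 a
      apply (Vᶜ.orderEmbOfFin hVc).injective
      rw [← mkPerm_apply_not_mem hP hV hPc hVc σ τ a,
        ← mkPerm_apply_not_mem hP hV hPc hVc σ' τ' a, hπeq]
    rw [hσeq, hτeq]

open scoped symmDiff

open Classical in
lemma partB (C D : PermClass) (m : ℕ)
    (h : ∀ (k : ℕ) (π : Perm k), π ∈ C.mem k → π ∈ D.mem k → k ≤ m) (n : ℕ) :
    (Finset.univ.filter (fun p : Perm n × Finset (Fin n) =>
        SubpermIn p.1 ↑p.2 C.mem ∧ SubpermIn p.1 (↑p.2 : Set (Fin n))ᶜ D.mem)).card ≤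
      (mergeSet C.mem D.mem n).ncard * ∑ i ∈ Finset.range (2 * m + 1), n.choose i := by
  classical
  set K := (Finset.univ.filter (fun p : Perm n × Finset (Fin n) =>
    SubpermIn p.1 ↑p.2 C.mem ∧ SubpermIn p.1 (↑p.2 : Set (Fin n))ᶜ D.mem)) with hK
  set mergeF := (Set.toFinite (mergeSet C.mem D.mem n)).toFinset with hm
  have hmap : ∀ p ∈ K, p.1 ∈ mergeF := by
    rintro ⟨π, A⟩ hp
    simp only [hK, Finset.mem_filter] at hp
    rw [hm, Set.Finite.mem_toFinset]
    exact ⟨↑A, hp.2.1, hp.2.2⟩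
  rw [Finset.card_eq_sum_card_fiberwise hmap]
  have hfib : ∀ π ∈ mergeF,
      (K.filter (fun p => p.1 = π)).card ≤ ∑ i ∈ Finset.range (2 * m + 1), n.choose i := by
    intro π _
    rcases (K.filter (fun p => p.1 = π)).eq_empty_or_nonempty with he | ⟨⟨π₀, A₀⟩, hp0⟩
    · rw [he]; simp
    · simp only [Finset.mem_filter, hK, Finset.mem_univ, true_and] at hp0
      obtain ⟨⟨h0C, h0D⟩, h0π⟩ := hp0
      subst h0π
      -- the target finset : subsets of size ≤ 2m
      set smallF := Finset.univ.filter (fun S : Finset (Fin n) => S.card ≤ 2 * m) with hsm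
      have hstep : (K.filter (fun p => p.1 = π₀)).card ≤ smallF.card := by
        apply Finset.card_le_card_of_injOn (f := fun p => p.2 ∆ A₀)
        · rintro ⟨ρ, A⟩ hp
          simp only [Finset.mem_coe, Finset.mem_filter, hK, Finset.mem_univ, true_and] at hp
          obtain ⟨⟨hAC, hAD⟩, hρ⟩ := hp
          subst hρ
          have key : ∀ (S T : Finset (Fin n)), SubpermIn ρ ↑S C.mem →
              SubpermIn ρ (↑T : Set (Fin n))ᶜ D.mem → (S \ T).card ≤ m := by
            intro S T hSC hTD
            have hsub1 : (↑(S \ T) : Set (Fin n)) ⊆ ↑S := by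
              rw [Finset.coe_sdiff]; exact Set.diff_subset
            have hsub2 : (↑(S \ T) : Set (Fin n)) ⊆ (↑T : Set (Fin n))ᶜ := by
              rw [Finset.coe_sdiff]
              intro x hx
              exact hx.2
            have := ncard_le_of_both ρ C D m h
              (subpermIn_anti ρ C hSC hsub1) (subpermIn_anti ρ D hTD hsub2)
            rwa [Set.ncard_coe_finset] at this
          have h1 : (A \ A₀).card ≤ m := key A A₀ hAC h0D
          have h2 : (A₀ \ A).card ≤ m := key A₀ A h0C hAD
          simp only [hsm, Finset.mem_coe, Finset.mem_filter, Finset.mem_univ, true_and]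
          calc (A ∆ A₀).card ≤ (A \ A₀).card + (A₀ \ A).card := by
                rw [symmDiff_def]
                exact Finset.card_union_le _ _
            _ ≤ 2 * m := by omega
        · rintro ⟨ρ, A⟩ hp ⟨ρ', A'⟩ hp' heq
          simp only [Finset.mem_coe, Finset.mem_filter] at hp hp'
          have : A = A' := symmDiff_left_injective A₀ heq
          rw [Prod.mk.injEq]
          exact ⟨hp.2.trans hp'.2.symm, this⟩
      refine hstep.trans ?_
      -- count subsets of size ≤ 2m
      have hmapc : ∀ S ∈ smallF, S.card ∈ Finset.range (2 * m + 1) := by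
        intro S hS
        simp only [hsm, Finset.mem_filter] at hS
        rw [Finset.mem_range]
        omega
      rw [Finset.card_eq_sum_card_fiberwise hmapc]
      apply Finset.sum_le_sum
      intro i _
      have : smallF.filter (fun S => S.card = i) ⊆ Finset.powersetCard i Finset.univ := by
        intro S hS
        simp only [hsm, Finset.mem_filter] at hS
        rw [Finset.mem_powersetCard_univ]
        exact hS.2
      calc (smallF.filter (fun S => S.card = i)).card
          ≤ (Finset.powersetCard i Finset.univ).card := Finset.card_le_card this
        _ = n.choose i := by rw [Finset.card_powersetCard, Finset.card_univ, Fintype.card_fin]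
  calc ∑ π ∈ mergeF, (K.filter (fun p => p.1 = π)).card
      ≤ ∑ _π ∈ mergeF, ∑ i ∈ Finset.range (2 * m + 1), n.choose i := Finset.sum_le_sum hfib
    _ = mergeF.card * ∑ i ∈ Finset.range (2 * m + 1), n.choose i := by
        rw [Finset.sum_const, smul_eq_mul]
    _ = (mergeSet C.mem D.mem n).ncard * ∑ i ∈ Finset.range (2 * m + 1), n.choose i := by
        rw [hm, ← Set.ncard_eq_toFinset_card]

/-- If every permutation lying in both `C` and `D` has length at most `m`,
then `∑_{i=0}^{n} (n choose i)² |C_i| |D_{n-i}| ≤ |(C⊙D)_n| · ∑_{i=0}^{2m} (n choose i)`. -/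
theorem sum_le_merge_count_mul (C D : PermClass) (m : ℕ)
    (h : ∀ (k : ℕ) (π : Perm k), π ∈ C.mem k → π ∈ D.mem k → k ≤ m) (n : ℕ) :
    ∑ i ∈ Finset.range (n + 1),
        n.choose i ^ 2 * (C.mem i).ncard * (D.mem (n - i)).ncard ≤
      (mergeSet C.mem D.mem n).ncard * ∑ i ∈ Finset.range (2 * m + 1), n.choose i := by
  exact (partA C D n).trans (partB C D m h n)
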